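/- Let C be a class of distributions on a countable domain X, let α ≥ 1, and let 𝒱 be a class of adaptive adversaries containing adversaries V1 and V2 with fixed constant budgets budget(V1) = η1 and budget(V2) = η2. Let γ', ζ ∈ (0,1) and set γ = 2α·max{η1, η2} + 2γ'. If for every m ∈ ℕ the pair of adversaries (V1,V2) successfully (γ,ζ)-confuses C-generated samples of size m, then C is not α-robustly learnable with respect to 𝒱. Moreover, if V1 = V2, then V1 is a universal α-adversary for C. -/

import Mathlib

open scoped ENNReal NNReal

/-- Total variation distance between two discrete distributions. -/
noncomputable def tv {X : Type*} (p q : PMF X) : ℝ :=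
  (∑' x, |(p x).toReal - (q x).toReal|) / 2

/-- The distribution of an i.i.d. sample of size `m` from `p`, viewed as a multiset. -/
noncomputable def iid {X : Type*} (p : PMF X) : ℕ → PMF (Multiset X)
  | 0 => PMF.pure 0
  | n + 1 => (iid p n).bind fun s => p.map fun x => x ::ₘ s

/-- `|Q|^m` : first draw `q ∼ Q`, then an i.i.d. sample `S ∼ q^m`. -/
noncomputable def metaSample {X : Type*} (Q : PMF (PMF X)) (m : ℕ) : PMF (Multiset X) :=
  Q.bind fun q => iid q m

/-- An adaptive adversary: a randomized map from samples (finite multisets) to samples. -/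
abbrev Adversary (X : Type*) := Multiset X → PMF (Multiset X)

/-- `V(P)`: the distribution of `V S` for `S ∼ P` (including internal randomness). -/
noncomputable def advPush {X : Type*} (V : Adversary X) (P : PMF (Multiset X)) :
    PMF (Multiset X) := P.bind V

/-- An additive adversary only adds points: `S ⊆ V(S)` almost surely. -/
def IsAdditive {X : Type*} (V : Adversary X) : Prop :=
  ∀ S T, T ∈ (V S).support → S ≤ T

/-- A subtractive adversary only removes points: `V(S) ⊆ S` almost surely. -/
def IsSubtractive {X : Type*} (V : Adversary X) : Prop :=
  ∀ S T, T ∈ (V S).support → T ≤ S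

/-- Fixed constant budget `η`: `|V(S)|` depends only on `|S|` (via `c`), and for every `m`,
`η m − 1 < m·budget(V,m) ≤ η m` where `m·budget(V,m) = ||V(S)| − |S||`. -/
def FixedBudget {X : Type*} (V : Adversary X) (η : ℝ) : Prop :=
  ∃ c : ℕ → ℕ, (∀ S T, T ∈ (V S).support → Multiset.card T = c (Multiset.card S)) ∧
    ∀ m : ℕ, η * m - 1 < |(c m : ℝ) - m| ∧ |(c m : ℝ) - m| ≤ η * m

/-- Fixed constant budget `η` for an additive adversary (`m·budget(V,m) = |V(S)| − |S|`). -/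
def FixedBudgetAdd {X : Type*} (V : Adversary X) (η : ℝ) : Prop :=
  ∃ c : ℕ → ℕ, (∀ S T, T ∈ (V S).support → Multiset.card T = c (Multiset.card S)) ∧
    ∀ m : ℕ, η * m - 1 < (c m : ℝ) - m ∧ (c m : ℝ) - m ≤ η * m

/-- Fixed constant budget `η` for a subtractive adversary (`m·budget(V,m) = |S| − |V(S)|`). -/
def FixedBudgetSub {X : Type*} (V : Adversary X) (η : ℝ) : Prop :=
  ∃ c : ℕ → ℕ, (∀ S T, T ∈ (V S).support → Multiset.card T = c (Multiset.card S)) ∧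
    ∀ m : ℕ, η * m - 1 < (m : ℝ) - c m ∧ (m : ℝ) - c m ≤ η * m

/-- Probability of an event under a discrete distribution. -/
noncomputable def probEvent {β : Type*} (P : PMF β) (E : Set β) : ℝ≥0∞ :=
  P.toOuterMeasure E

/-- `A` with sample complexity `mc` learns the class `C` against adversary `V`,
up to error `bound + ε` with confidence `1 − δ` once `m ≥ mc ε δ`. -/
def RobustLearnerFor {X : Type*} (C : Set (PMF X)) (A : Multiset X → PMF X)
    (mc : ℝ → ℝ → ℕ) (V : Adversary X) (bound : ℝ) : Prop :=
  ∀ p ∈ C, ∀ ε δ : ℝ, 0 < ε → ε < 1 → 0 < δ → δ < 1 →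
    ∀ m : ℕ, mc ε δ ≤ m →
      1 - ENNReal.ofReal δ ≤
        probEvent ((iid p m).bind V) {T | tv (A T) p ≤ bound + ε}

/-- `C` is adaptively α-robustly learnable w.r.t. the single adversary `V` with budget `η`. -/
def RobustlyLearnableWrt {X : Type*} (C : Set (PMF X)) (α : ℝ)
    (V : Adversary X) (η : ℝ) : Prop :=
  ∃ A mc, RobustLearnerFor C A mc V (α * η)

/-- `V` (with budget `η`) is a universal α-adversary for `C`. -/
def UniversalAdversary {X : Type*} (C : Set (PMF X)) (α : ℝ)
    (V : Adversary X) (η : ℝ) : Prop :=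
  ¬ RobustlyLearnableWrt C α V η

/-- `C` is adaptively α-robustly learnable w.r.t. a class `𝒱` of adversaries
(each given with its budget). -/
def RobustlyLearnableWrtClass {X : Type*} (C : Set (PMF X)) (α : ℝ)
    (𝒱 : Set (Adversary X × ℝ)) : Prop :=
  ∃ A mc, ∀ Vη ∈ 𝒱, RobustLearnerFor C A mc Vη.1 (α * Vη.2)

/-- `C` is adaptively additively α-robustly learnable: one learner works simultaneously
against all additive adaptive adversaries with fixed constant budgets. -/
def AdditivelyRobustlyLearnable {X : Type*} (C : Set (PMF X)) (α : ℝ) : Prop :=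
  ∃ A mc, ∀ V : Adversary X, ∀ η : ℝ, 0 < η → η < 1 →
    IsAdditive V → FixedBudgetAdd V η → RobustLearnerFor C A mc V (α * η)

/-- `C` is adaptively subtractively α-robustly learnable. -/
def SubtractivelyRobustlyLearnable {X : Type*} (C : Set (PMF X)) (α : ℝ) : Prop :=
  ∃ A mc, ∀ V : Adversary X, ∀ η : ℝ, 0 < η → η < 1 →
    IsSubtractive V → FixedBudgetSub V η → RobustLearnerFor C A mc V (α * η)

/-- The pair `(V1, V2)` successfully `(γ,ζ)`-confuses `C`-generated samples of size `m`. -/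
def ConfusesPair {X : Type*} (C : Set (PMF X)) (V1 V2 : Adversary X)
    (γ ζ : ℝ) (m : ℕ) : Prop :=
  ∃ p ∈ C, ∃ Q : PMF (PMF X), Q.support ⊆ C ∧
    (∀ q ∈ Q.support, γ < tv p q) ∧
    tv (advPush V1 (metaSample Q m)) (advPush V2 (iid p m)) < ζ

/-- A single adversary `V` successfully `(γ,ζ)`-confuses `C`-generated samples of size `m`. -/
def Confuses {X : Type*} (C : Set (PMF X)) (V : Adversary X) (γ ζ : ℝ) (m : ℕ) : Prop :=
  ConfusesPair C V V γ ζ m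

/-- `p` is the distribution `p_{i,j,k} = (1 − 1/j)·δ_{(0,0)} + (1/j − 1/k)·U_{B_i×{2j+1}}
 + (1/k)·δ_{(i,2j+2)}` on `ℕ × ℕ`. -/
def IsPijk (B : ℕ → Finset ℕ) (i j k : ℕ) (p : PMF (ℕ × ℕ)) : Prop :=
  ∀ x : ℕ × ℕ,
    p x = (1 - ((j : ℝ≥0∞))⁻¹) * (if x = (0, 0) then 1 else 0)
      + (((j : ℝ≥0∞))⁻¹ - ((k : ℝ≥0∞))⁻¹) *
          (if x.1 ∈ B i ∧ x.2 = 2 * j + 1 then (((B i).card : ℝ≥0∞))⁻¹ else 0)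
      + ((k : ℝ≥0∞))⁻¹ * (if x = (i, 2 * j + 2) then 1 else 0)

/-- The class `C_g = {p_{i,j,g(j)} : i, j ∈ ℕ}` (for the meaningful parameters). -/
def Cg (B : ℕ → Finset ℕ) (g : ℕ → ℕ) : Set (PMF (ℕ × ℕ)) :=
  {p | ∃ i j : ℕ, 1 ≤ j ∧ j < g j ∧ (B i).Nonempty ∧ IsPijk B i j (g j) p}

/-- `g` is superlinear: `g(n)/n → ∞`. -/
def Superlinear (g : ℕ → ℕ) : Prop :=
  Filter.Tendsto (fun n => (g n : ℝ) / n) Filter.atTop Filter.atTop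

section Aux

variable {X : Type*}

lemma pmf_toReal_summable (p : PMF X) : Summable fun x => (p x).toReal := by
  apply ENNReal.summable_toReal
  rw [p.tsum_coe]; exact ENNReal.one_ne_top

lemma pmf_tsum_toReal (p : PMF X) : ∑' x, (p x).toReal = 1 := by
  rw [← ENNReal.tsum_toReal_eq (fun a => p.apply_ne_top a), p.tsum_coe, ENNReal.toReal_one]

lemma tv_symm (p q : PMF X) : tv p q = tv q p := by
  unfold tv
  congr 1
  exact tsum_congr fun x => abs_sub_comm _ _

lemma tv_triangle (p r q : PMF X) : tv p q ≤ tv p r + tv r q := by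
  unfold tv
  rw [← add_div, div_le_div_iff_of_pos_right (by norm_num : (0:ℝ) < 2)]
  have h1 : Summable fun x => |(p x).toReal - (r x).toReal| :=
    ((pmf_toReal_summable p).sub (pmf_toReal_summable r)).abs
  have h2 : Summable fun x => |(r x).toReal - (q x).toReal| :=
    ((pmf_toReal_summable r).sub (pmf_toReal_summable q)).abs
  calc ∑' x, |(p x).toReal - (q x).toReal|
      ≤ ∑' x, (|(p x).toReal - (r x).toReal| + |(r x).toReal - (q x).toReal|) := by
        refine Summable.tsum_le_tsum (fun x => ?_)
          (((pmf_toReal_summable p).sub (pmf_toReal_summable q)).abs) (h1.add h2)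
        exact abs_sub_le _ _ _
    _ = _ := Summable.tsum_add h1 h2

lemma probEvent_le_one (P : PMF X) (E : Set X) : probEvent P E ≤ 1 := by
  unfold probEvent
  rw [PMF.toOuterMeasure_apply]
  calc ∑' x, E.indicator (⇑P) x ≤ ∑' x, P x :=
        ENNReal.tsum_le_tsum fun x => Set.indicator_le_self _ _ _
    _ = 1 := P.tsum_coe

lemma probEvent_ne_top (P : PMF X) (E : Set X) : probEvent P E ≠ ⊤ :=
  ((probEvent_le_one P E).trans_lt ENNReal.one_lt_top).ne

lemma probEvent_add_compl (P : PMF X) (E : Set X) :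
    probEvent P E + probEvent P Eᶜ = 1 := by
  unfold probEvent
  rw [PMF.toOuterMeasure_apply, PMF.toOuterMeasure_apply, ← ENNReal.tsum_add]
  rw [tsum_congr fun x => Set.indicator_self_add_compl_apply E (⇑P) x]
  exact P.tsum_coe

lemma probEvent_compl (P : PMF X) (E : Set X) :
    probEvent P Eᶜ = 1 - probEvent P E := by
  have h := probEvent_add_compl P E
  rw [add_comm] at h
  exact (ENNReal.eq_sub_of_add_eq (probEvent_ne_top P E) h)

lemma probEvent_mono (P : PMF X) {E F : Set X} (h : E ⊆ F) :
    probEvent P E ≤ probEvent P F :=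
  P.toOuterMeasure.mono h

lemma probEvent_bind {Y : Type*} (P : PMF X) (f : X → PMF Y) (E : Set Y) :
    probEvent (P.bind f) E = ∑' a, P a * probEvent (f a) E :=
  PMF.toOuterMeasure_bind_apply P f E

lemma probEvent_toReal_eq (P : PMF X) (E : Set X) :
    (probEvent P E).toReal = ∑' x, E.indicator (fun x => (P x).toReal) x := by
  unfold probEvent
  rw [PMF.toOuterMeasure_apply, ENNReal.tsum_toReal_eq]
  · exact tsum_congr fun x => by
      by_cases hx : x ∈ E <;> simp [Set.indicator, hx]
  · intro a
    by_cases ha : a ∈ E <;> simp [Set.indicator, ha, PMF.apply_ne_top]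

lemma tsum_indicator_add_compl {u : X → ℝ} (hu : Summable u) (E : Set X) :
    (∑' x, E.indicator u x) + (∑' x, Eᶜ.indicator u x) = ∑' x, u x := by
  rw [← Summable.tsum_add (hu.indicator E) (hu.indicator Eᶜ)]
  exact tsum_congr fun x => Set.indicator_self_add_compl_apply E u x

lemma diff_le_tv (P P' : PMF X) (E : Set X) :
    (probEvent P E).toReal - (probEvent P' E).toReal ≤ tv P P' := by
  rw [probEvent_toReal_eq, probEvent_toReal_eq]
  set f : X → ℝ := fun x => (P x).toReal with hf
  set g : X → ℝ := fun x => (P' x).toReal with hg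
  have hfs : Summable f := pmf_toReal_summable P
  have hgs : Summable g := pmf_toReal_summable P'
  set h : X → ℝ := fun x => f x - g x with hh
  have hhs : Summable h := hfs.sub hgs
  have habs : Summable fun x => |h x| := hhs.abs
  have hdiff : (∑' x, E.indicator f x) - (∑' x, E.indicator g x) = ∑' x, E.indicator h x := by
    rw [← Summable.tsum_sub (hfs.indicator E) (hgs.indicator E)]
    exact tsum_congr fun x => by
      by_cases hx : x ∈ E <;> simp [Set.indicator, hx, hh]
  rw [hdiff]
  have hsum0 : ∑' x, h x = 0 := by
    rw [hh]
    simp only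
    rw [Summable.tsum_sub hfs hgs, hf, hg, pmf_tsum_toReal, pmf_tsum_toReal, sub_self]
  have hA := tsum_indicator_add_compl hhs E
  have hB := tsum_indicator_add_compl habs E
  have h1 : (∑' x, E.indicator h x) ≤ ∑' x, E.indicator (fun x => |h x|) x := by
    refine Summable.tsum_le_tsum (fun x => ?_) (hhs.indicator E) (habs.indicator E)
    by_cases hx : x ∈ E <;> simp [Set.indicator, hx, le_abs_self]
  have h2 : -(∑' x, Eᶜ.indicator h x) ≤ ∑' x, Eᶜ.indicator (fun x => |h x|) x := by
    rw [← tsum_neg]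
    refine Summable.tsum_le_tsum (fun x => ?_) (hhs.indicator Eᶜ).neg (habs.indicator Eᶜ)
    by_cases hx : x ∈ Eᶜ <;> simp [Set.indicator, hx, neg_abs_le, neg_le_abs]
  have : ∑' x, E.indicator h x = -(∑' x, Eᶜ.indicator h x) := by linarith
  unfold tv
  linarith

lemma key_lemma (C : Set (PMF X)) (V1 V2 : Adversary X) (b1 b2 γ γ' ζ : ℝ)
    (hγ : b1 + b2 + 2 * γ' ≤ γ) (hγ'0 : 0 < γ') (hγ'1 : γ' < 1)
    (hζ0 : 0 < ζ) (hζ1 : ζ < 1)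
    (hconf : ∀ m : ℕ, ConfusesPair C V1 V2 γ ζ m)
    (A : Multiset X → PMF X) (mc : ℝ → ℝ → ℕ)
    (h1 : RobustLearnerFor C A mc V1 b1) (h2 : RobustLearnerFor C A mc V2 b2) :
    False := by
  set ε : ℝ := γ' / 2 with hε
  set δ : ℝ := (1 - ζ) / 4 with hδ
  have hε0 : 0 < ε := by positivity
  have hε1 : ε < 1 := by rw [hε]; linarith
  have hδ0 : 0 < δ := by rw [hδ]; linarith
  have hδ1 : δ < 1 := by rw [hδ]; linarith
  set m : ℕ := mc ε δ with hm
  obtain ⟨p, hpC, Q, hQC, hQfar, htv⟩ := hconf m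
  set E : Set (Multiset X) := {T | tv (A T) p ≤ b2 + ε} with hE
  -- guarantee for V2 on p
  have hP2 : 1 - ENNReal.ofReal δ ≤ probEvent ((iid p m).bind V2) E :=
    h2 p hpC ε δ hε0 hε1 hδ0 hδ1 m le_rfl
  -- per-q bound for V1
  have hq : ∀ q ∈ Q.support, probEvent ((iid q m).bind V1) E ≤ ENNReal.ofReal δ := by
    intro q hqsupp
    have hqC : q ∈ C := hQC hqsupp
    set G : Set (Multiset X) := {T | tv (A T) q ≤ b1 + ε} with hG
    have hG1 : 1 - ENNReal.ofReal δ ≤ probEvent ((iid q m).bind V1) G :=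
      h1 q hqC ε δ hε0 hε1 hδ0 hδ1 m le_rfl
    have hsub : E ⊆ Gᶜ := by
      intro T hTE hTG
      have hfar := hQfar q hqsupp
      have htri : tv p q ≤ tv p (A T) + tv (A T) q := tv_triangle p (A T) q
      rw [tv_symm p (A T)] at htri
      have hTE' : tv (A T) p ≤ b2 + ε := hTE
      have hTG' : tv (A T) q ≤ b1 + ε := hTG
      rw [hε] at hTE' hTG'
      linarith
    calc probEvent ((iid q m).bind V1) E
        ≤ probEvent ((iid q m).bind V1) Gᶜ := probEvent_mono _ hsub
      _ = 1 - probEvent ((iid q m).bind V1) G := probEvent_compl _ _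
      _ ≤ 1 - (1 - ENNReal.ofReal δ) := tsub_le_tsub_left hG1 1
      _ = ENNReal.ofReal δ :=
          ENNReal.sub_sub_cancel ENNReal.one_ne_top (ENNReal.ofReal_le_one.mpr hδ1.le)
  -- bound on the pushed meta distribution
  have hP1 : probEvent (advPush V1 (metaSample Q m)) E ≤ ENNReal.ofReal δ := by
    have hbind : advPush V1 (metaSample Q m) = Q.bind fun q => (iid q m).bind V1 := by
      unfold advPush metaSample
      rw [PMF.bind_bind]
    rw [hbind, probEvent_bind]
    calc ∑' q, Q q * probEvent ((iid q m).bind V1) E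
        ≤ ∑' q, Q q * ENNReal.ofReal δ := by
          refine ENNReal.tsum_le_tsum fun q => ?_
          by_cases hq0 : Q q = 0
          · simp [hq0]
          · exact mul_le_mul_right (hq q (by simpa [PMF.mem_support_iff] using hq0)) _
      _ = ENNReal.ofReal δ := by rw [ENNReal.tsum_mul_right, Q.tsum_coe, one_mul]
  -- convert to real numbers
  have hP1R : (probEvent (advPush V1 (metaSample Q m)) E).toReal ≤ δ :=
    ENNReal.toReal_le_of_le_ofReal hδ0.le hP1
  have hP2R : 1 - δ ≤ (probEvent (advPush V2 (iid p m)) E).toReal := by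
    have hmono := ENNReal.toReal_mono (probEvent_ne_top _ _) hP2
    have : (1 - ENNReal.ofReal δ).toReal = 1 - δ := by
      rw [← ENNReal.ofReal_one, ← ENNReal.ofReal_sub _ hδ0.le,
        ENNReal.toReal_ofReal (by linarith)]
    rw [this] at hmono
    exact hmono.trans_eq rfl
  have hdiff := diff_le_tv (advPush V2 (iid p m)) (advPush V1 (metaSample Q m)) E
  rw [tv_symm] at hdiff
  rw [hδ] at hP1R hP2R
  linarith

end Aux

/-- If for every `m` the pair `(V1,V2)` (members of `𝒱`, with fixed constant
budgets `η1, η2`) successfully `(2α·max{η1,η2} + 2γ', ζ)`-confuses `C`-generated samples of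
size `m`, then `C` is not α-robustly learnable w.r.t. `𝒱`; and if `V1 = V2` then `V1` is a
universal α-adversary for `C`. -/
theorem stmt3 {X : Type*} [Countable X] (C : Set (PMF X)) (α : ℝ) (hα : 1 ≤ α)
    (𝒱 : Set (Adversary X × ℝ)) (V1 V2 : Adversary X) (η1 η2 : ℝ)
    (hV1 : (V1, η1) ∈ 𝒱) (hV2 : (V2, η2) ∈ 𝒱)
    (hη1 : η1 ∈ Set.Ioo (0 : ℝ) 1) (hη2 : η2 ∈ Set.Ioo (0 : ℝ) 1)
    (hb1 : FixedBudget V1 η1) (hb2 : FixedBudget V2 η2)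
    (γ' ζ : ℝ) (hγ' : γ' ∈ Set.Ioo (0 : ℝ) 1) (hζ : ζ ∈ Set.Ioo (0 : ℝ) 1)
    (hconf : ∀ m : ℕ, ConfusesPair C V1 V2 (2 * α * max η1 η2 + 2 * γ') ζ m) :
    ¬ RobustlyLearnableWrtClass C α 𝒱 ∧
      (V1 = V2 → UniversalAdversary C α V1 η1) := by
  have hα0 : (0:ℝ) < α := lt_of_lt_of_le one_pos hα
  have hmax1 : α * η1 ≤ α * max η1 η2 :=
    mul_le_mul_of_nonneg_left (le_max_left _ _) hα0.le
  have hmax2 : α * η2 ≤ α * max η1 η2 :=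
    mul_le_mul_of_nonneg_left (le_max_right _ _) hα0.le
  constructor
  · rintro ⟨A, mc, hA⟩
    exact key_lemma C V1 V2 (α * η1) (α * η2) (2 * α * max η1 η2 + 2 * γ') γ' ζ
      (by linarith) hγ'.1 hγ'.2 hζ.1 hζ.2 hconf A mc
      (hA (V1, η1) hV1) (hA (V2, η2) hV2)
  · intro hV12
    subst hV12
    rintro ⟨A, mc, hA⟩
    exact key_lemma C V1 V1 (α * η1) (α * η1) (2 * α * max η1 η2 + 2 * γ') γ' ζ
      (by linarith) hγ'.1 hγ'.2 hζ.1 hζ.2 hconf A mc hA hA
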